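/- Define words w_n over the alphabet {1, …, n} recursively by w₁ = (1) and w_n = w_{n−1} · (n) · ∏_{j=1}^{n−1} ((n)(n−j)). For n ≥ 2, the set of cyclically adjacent ordered pairs of letters in w_n (i.e., pairs (w_n[i], w_n[i+1 mod |w_n|])) equals the full set {(i, j) : 1 ≤ i, j ≤ n}, and moreover each ordered pair occurs exactly once among the |w_n| cyclic positions. -/

import Mathlib

/-- The word `w n` over the alphabet `{1, …, n}`. -/
def specialWord : ℕ → List ℕ
  | 0 => []
  | 1 => [1]
  | (n + 1) =>
      specialWord n ++ [n + 1] ++ (List.range n).flatMap (fun j => [n + 1, n - j])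

/-- The cyclically adjacent ordered pair of letters of `u` at position `i`. -/
def cyclicPair (u : List ℕ) (i : ℕ) : ℕ × ℕ :=
  (u.getD i 0, u.getD ((i + 1) % u.length) 0)

namespace SW

/-- adjacent pairs of a list -/
def adj : List ℕ → List (ℕ × ℕ)
  | x :: y :: t => (x, y) :: adj (y :: t)
  | _ => []

@[simp] lemma adj_nil : adj [] = [] := rfl
@[simp] lemma adj_single (x : ℕ) : adj [x] = [] := rfl
@[simp] lemma adj_cons_cons (x y : ℕ) (t : List ℕ) :
    adj (x :: y :: t) = (x, y) :: adj (y :: t) := rfl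

lemma adj_length : ∀ u : List ℕ, (adj u).length = u.length - 1
  | [] => rfl
  | [_] => rfl
  | x :: y :: t => by simp [adj_length (y :: t)]

lemma adj_append_cons : ∀ (a : List ℕ) (c : ℕ) (d : List ℕ),
    adj (a ++ c :: d) = adj (a ++ [c]) ++ adj (c :: d)
  | [], c, d => by simp
  | [x], c, d => by simp
  | x :: y :: t, c, d => by
      have h := adj_append_cons (y :: t) c d
      simp only [List.cons_append, adj_cons_cons] at h ⊢
      rw [h]

lemma adj_append_singleton : ∀ (a : List ℕ) (ha : a ≠ []) (c : ℕ),
    adj (a ++ [c]) = adj a ++ [(a.getLast ha, c)]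
  | [], ha, c => absurd rfl ha
  | [x], _, c => by simp
  | x :: y :: t, _, c => by
      have h := adj_append_singleton (y :: t) (by simp) c
      simp only [List.cons_append, adj_cons_cons] at h ⊢
      rw [h]
      simp [List.getLast]

lemma adj_getD : ∀ (u : List ℕ) (i : ℕ), i + 1 < u.length →
    (adj u).getD i (0, 0) = (u.getD i 0, u.getD (i + 1) 0)
  | [], i, h => by simp at h
  | [_], i, h => by simp at h
  | x :: y :: t, 0, h => by simp
  | x :: y :: t, (i+1), h => by
      have h' : i + 1 < (y :: t).length := by
        simpa [Nat.succ_lt_succ_iff] using h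
      simp only [adj_cons_cons, List.getD_cons_succ]
      exact adj_getD (y :: t) i h'

/-- cyclic pairs of a list -/
def cyc (u : List ℕ) : List (ℕ × ℕ) := adj (u ++ [u.headI])

lemma cyc_length (u : List ℕ) : (cyc u).length = u.length := by
  simp [cyc, adj_length]

lemma headI_eq_getD (u : List ℕ) (hu : u ≠ []) : u.headI = u.getD 0 0 := by
  cases u with
  | nil => exact absurd rfl hu
  | cons a t => simp

lemma cyc_getD (u : List ℕ) (i : ℕ) (hi : i < u.length) :
    (cyc u).getD i (0, 0) = cyclicPair u i := by
  have hu : u ≠ [] := by rintro rfl; simp at hi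
  have h1 : i + 1 < (u ++ [u.headI]).length := by
    simp; omega
  rw [cyc, adj_getD _ i h1, cyclicPair]
  congr 1
  · exact List.getD_append _ _ _ _ hi
  · rcases Nat.lt_or_ge (i + 1) u.length with h | h
    · rw [List.getD_append _ _ _ _ h, Nat.mod_eq_of_lt h]
    · have hi1 : i + 1 = u.length := by omega
      rw [List.getD_append_right _ _ _ _ h, hi1]
      simp [Nat.sub_self, headI_eq_getD u hu]

lemma cyc_get (u : List ℕ) (i : Fin u.length) :
    cyclicPair u i = (cyc u).get (Fin.cast (cyc_length u).symm i) := by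
  rw [← cyc_getD u i i.isLt]
  rw [List.getD_eq_getElem]
  rfl

/-! ### Structure of `specialWord` -/

lemma sw_succ (n : ℕ) (hn : 1 ≤ n) :
    specialWord (n + 1) =
      specialWord n ++ [n + 1] ++ (List.range n).flatMap (fun j => [n + 1, n - j]) := by
  obtain ⟨m, rfl⟩ : ∃ m, n = m + 1 := ⟨n - 1, by omega⟩
  rfl

lemma sw_ne_nil : ∀ n : ℕ, 1 ≤ n → specialWord n ≠ []
  | 1, _ => by simp [specialWord]
  | (n+2), _ => by
      rw [sw_succ (n+1) (by omega)]
      simp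

lemma sw_headI : ∀ n : ℕ, 1 ≤ n → (specialWord n).headI = 1
  | 1, _ => rfl
  | (n+2), _ => by
      rw [sw_succ (n+1) (by omega)]
      have h := sw_ne_nil (n+1) (by omega)
      cases hw : specialWord (n+1) with
      | nil => exact absurd hw h
      | cons a t =>
          have := sw_headI (n+1) (by omega)
          rw [hw] at this
          simpa using this

lemma sw_getLast? : ∀ n : ℕ, 1 ≤ n → (specialWord n).getLast? = some 1
  | 1, _ => rfl
  | (n+2), _ => by
      rw [sw_succ (n+1) (by omega)]
      rw [List.range_succ, List.flatMap_append]
      have h1 : (([n] : List ℕ).flatMap fun j => [n + 1 + 1, n + 1 - j]) =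
          [n + 1 + 1] ++ [1] := by
        simp
      rw [h1]
      simp only [← List.append_assoc]
      rw [List.getLast?_concat]

lemma sw_getLast (n : ℕ) (hn : 1 ≤ n) (h : specialWord n ≠ []) :
    (specialWord n).getLast h = 1 := by
  have := sw_getLast? n hn
  rwa [List.getLast?_eq_getLast h, Option.some_inj] at this

/-! ### Multiset computations -/

/-- target multiset: all pairs `(i+1, j+1)` for `i j < n`. -/
def TM (n : ℕ) : Multiset (ℕ × ℕ) :=
  (Multiset.range n).bind (fun i => (Multiset.range n).map (fun j => (i + 1, j + 1)))

lemma adjA (k : ℕ) : ∀ (m : ℕ) (g : ℕ → ℕ),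
    (↑(adj (k :: (List.range (m + 1)).flatMap (fun j => [k, g j]))) : Multiset (ℕ × ℕ)) =
      (k, k) ::ₘ ((Multiset.range (m + 1)).map (fun j => (k, g j)) +
        (Multiset.range m).map (fun j => (g j, k)))
  | 0, g => by
      simp [List.range_succ]
      rfl
  | (m+1), g => by
      have hne : (k :: (List.range (m+1)).flatMap fun j => [k, g j]) ≠ [] := by simp
      have hl? : (k :: (List.range (m+1)).flatMap fun j => [k, g j]).getLast? = some (g m) := by
        rw [List.range_succ, List.flatMap_append]
        have e : (([m] : List ℕ).flatMap fun j => [k, g j]) = [k] ++ [g m] := by simp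
        rw [e]
        rw [show (k :: (((List.range m).flatMap fun j => [k, g j]) ++ ([k] ++ [g m]))) =
          (k :: (((List.range m).flatMap fun j => [k, g j]) ++ [k])) ++ [g m] by simp]
        exact List.getLast?_concat
      have hl : (k :: (List.range (m+1)).flatMap fun j => [k, g j]).getLast hne = g m := by
        have := List.getLast?_eq_getLast hne
        rw [this] at hl?
        exact Option.some_inj.mp hl?
      rw [List.range_succ, List.flatMap_append]
      have e1 : (([m+1] : List ℕ).flatMap fun j => [k, g j]) = [k, g (m+1)] := by simp
      rw [e1]
      have e2 : k :: (((List.range (m+1)).flatMap fun j => [k, g j]) ++ [k, g (m+1)]) =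
          ((k :: (List.range (m+1)).flatMap fun j => [k, g j]) ++ (k :: [g (m+1)])) := by simp
      rw [e2, adj_append_cons, adj_append_singleton _ hne, hl]
      have e3 : adj (k :: [g (m+1)]) = [(k, g (m+1))] := rfl
      rw [e3]
      rw [← Multiset.coe_add, ← Multiset.coe_add, adjA k m g]
      rw [Multiset.range_succ (m+1), Multiset.range_succ m]
      simp only [Multiset.map_cons]
      simp only [← Multiset.singleton_add, Multiset.coe_singleton, ← Multiset.cons_coe,
        Multiset.coe_nil]
      abel

lemma lastF (k m : ℕ) (g : ℕ → ℕ) :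
    (k :: (List.range (m + 1)).flatMap fun j => [k, g j]).getLast? = some (g m) := by
  rw [List.range_succ, List.flatMap_append]
  have e : (([m] : List ℕ).flatMap fun j => [k, g j]) = [k] ++ [g m] := by simp
  rw [e]
  rw [show (k :: (((List.range m).flatMap fun j => [k, g j]) ++ ([k] ++ [g m]))) =
    (k :: (((List.range m).flatMap fun j => [k, g j]) ++ [k])) ++ [g m] by simp]
  exact List.getLast?_concat

lemma reindex (n : ℕ) :
    (Multiset.range n).map (fun j => n - j) = (Multiset.range n).map (fun j => j + 1) := by
  refine (Multiset.Nodup.ext ?_ ?_).mpr ?_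
  · refine Multiset.Nodup.map_on ?_ (Multiset.nodup_range n)
    intro x hx y hy h
    simp only [Multiset.mem_range] at hx hy
    omega
  · refine Multiset.Nodup.map_on ?_ (Multiset.nodup_range n)
    intro x hx y hy h
    omega
  · intro a
    simp only [Multiset.mem_map, Multiset.mem_range]
    constructor
    · rintro ⟨j, hj, rfl⟩
      exact ⟨n - j - 1, by omega, by omega⟩
    · rintro ⟨j, hj, rfl⟩
      exact ⟨n - (j + 1), by omega, by omega⟩

lemma TM_succ (m : ℕ) :
    TM (m + 1) = TM m + (Multiset.range m).map (fun j => (m + 1, j + 1)) +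
      (Multiset.range (m + 1)).map (fun i => (i + 1, m + 1)) := by
  unfold TM
  rw [Multiset.range_succ m, Multiset.cons_bind]
  have e : ∀ i : ℕ, ((m ::ₘ Multiset.range m).map fun j => (i + 1, j + 1)) =
      (i + 1, m + 1) ::ₘ (Multiset.range m).map fun j => (i + 1, j + 1) := by
    intro i; rw [Multiset.map_cons]
  simp only [e]
  rw [Multiset.bind_cons]
  simp only [Multiset.map_cons]
  simp only [← Multiset.singleton_add]
  abel

lemma main : ∀ n : ℕ, 1 ≤ n → (↑(cyc (specialWord n)) : Multiset (ℕ × ℕ)) = TM n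
  | 1, _ => by
      show (↑(cyc [1]) : Multiset (ℕ × ℕ)) = TM 1
      rw [show cyc [1] = [(1,1)] from rfl]
      rw [show TM 1 = (Multiset.range 1).bind
        (fun i => (Multiset.range 1).map (fun j => (i + 1, j + 1))) from rfl]
      rw [Multiset.range_succ, Multiset.range_zero, Multiset.cons_bind]
      simp
  | (n+2), _ => by
      have hm : 1 ≤ n + 1 := by omega
      have IH := main (n+1) hm
      set w := specialWord (n+1) with hw
      have hwne : w ≠ [] := sw_ne_nil (n+1) hm
      have hwlast : w.getLast hwne = 1 := sw_getLast (n+1) hm hwne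
      have hwhead : w.headI = 1 := sw_headI (n+1) hm
      -- cyc w = adj w ++ [(1,1)]
      have hcycw : cyc w = adj w ++ [(1, 1)] := by
        rw [cyc, hwhead, adj_append_singleton w hwne 1, hwlast]
      -- the word at level n+2
      have hsw : specialWord (n+2) =
          w ++ [n+2] ++ (List.range (n+1)).flatMap (fun j => [n+2, (n+1) - j]) := rfl
      have hhead2 : (specialWord (n+2)).headI = 1 := sw_headI (n+2) (by omega)
      set F := (List.range (n+1)).flatMap (fun j => [n+2, (n+1) - j]) with hF
      have key : cyc (specialWord (n+2)) =
          (adj w ++ [(1, n+2)]) ++ (adj ((n+2) :: F) ++ [(1, 1)]) := by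
        rw [cyc, hhead2, hsw]
        rw [show w ++ [n+2] ++ F ++ [1] = w ++ ((n+2) :: (F ++ [1])) by simp]
        rw [adj_append_cons w (n+2) (F ++ [1])]
        rw [adj_append_singleton w hwne (n+2), hwlast]
        congr 1
        have hne2 : ((n+2) :: F) ≠ [] := by simp
        have hl2 : ((n+2) :: F).getLast hne2 = 1 := by
          have h := lastF (n+2) n (fun j => (n+1) - j)
          have h1 : n + 1 - n = 1 := by omega
          rw [h1] at h
          have h' : ((n+2) :: F).getLast? = some 1 := h
          rw [List.getLast?_eq_getLast hne2] at h'
          exact Option.some_inj.mp h'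
        rw [show ((n+2) :: (F ++ [1])) = ((n+2) :: F) ++ [1] by simp]
        rw [adj_append_singleton _ hne2 1, hl2]
      -- multiset computation
      have hA := adjA (n+2) n (fun j => (n+1) - j)
      have hcoe : (↑(cyc (specialWord (n+2))) : Multiset (ℕ × ℕ)) =
          (↑(adj w) + {(1, 1)}) + {(1, n+2)} +
            ((↑(adj ((n+2) :: F)) : Multiset (ℕ × ℕ))) := by
        rw [key]
        rw [← Multiset.coe_add, ← Multiset.coe_add, ← Multiset.coe_add]
        simp only [← Multiset.cons_coe, Multiset.coe_nil, ← Multiset.singleton_add]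
        abel
      have hadjw : (↑(adj w) : Multiset (ℕ × ℕ)) + {(1, 1)} = TM (n+1) := by
        rw [← IH, hcycw, ← Multiset.coe_add]
        simp only [← Multiset.cons_coe, Multiset.coe_nil, ← Multiset.singleton_add]
        abel
      rw [hcoe, hadjw, hA]
      -- now pure multiset algebra
      have r1 : (Multiset.range (n+1)).map (fun j => ((n+2 : ℕ), (n+1) - j)) =
          (Multiset.range (n+1)).map (fun j => ((n+2 : ℕ), j + 1)) := by
        have := congrArg (Multiset.map (fun a => ((n+2 : ℕ), a))) (reindex (n+1))
        simpa [Multiset.map_map, Function.comp] using this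
      have r2 : {((1 : ℕ), (n+2 : ℕ))} + (Multiset.range n).map (fun j => ((n+1) - j, (n+2 : ℕ))) =
          (Multiset.range (n+1)).map (fun i => (i + 1, (n+2 : ℕ))) := by
        have h2 : (Multiset.range (n+1)).map (fun j => ((n+1) - j, (n+2 : ℕ))) =
            (Multiset.range (n+1)).map (fun i => (i + 1, (n+2 : ℕ))) := by
          have := congrArg (Multiset.map (fun a => (a, (n+2 : ℕ)))) (reindex (n+1))
          simpa [Multiset.map_map, Function.comp] using this
        rw [← h2, Multiset.range_succ, Multiset.map_cons]
        have h3 : n + 1 - n = 1 := by omega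
        rw [h3, ← Multiset.singleton_add]
      rw [TM_succ (n+1)]
      simp only [show n + 1 + 1 = n + 2 from rfl]
      rw [r1]
      rw [show (Multiset.range (n+2)) = (n+1) ::ₘ Multiset.range (n+1) from
        Multiset.range_succ (n+1)]
      rw [Multiset.map_cons]
      simp only [show n + 1 + 1 = n + 2 from rfl]
      rw [← r2]
      simp only [← Multiset.singleton_add]
      abel

lemma TM_nodup (n : ℕ) : (TM n).Nodup := by
  rw [TM, Multiset.nodup_bind]
  constructor
  · intro a _
    refine Multiset.Nodup.map_on ?_ (Multiset.nodup_range n)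
    intro x _ y _ h
    simpa using h
  · have hsym : Symmetric (Function.onFun Disjoint
        (fun i : ℕ => (Multiset.range n).map (fun j => (i + 1, j + 1)))) :=
      fun a b h => h.symm
    refine (Multiset.pairwise_coe_iff_pairwise).mpr ?_
    refine List.Pairwise.imp ?_ (List.pairwise_lt_range (n := n))
    intro a b hab
    rw [Function.onFun, Multiset.disjoint_left]
    rintro x hx hx'
    simp only [Multiset.mem_map, Multiset.mem_range] at hx hx'
    obtain ⟨j, hj, rfl⟩ := hx
    obtain ⟨j', hj', h'⟩ := hx'
    have := congrArg Prod.fst h'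
    simp only [Prod.fst] at this
    omega

lemma TM_mem (n : ℕ) (p : ℕ × ℕ) :
    p ∈ TM n ↔ 1 ≤ p.1 ∧ p.1 ≤ n ∧ 1 ≤ p.2 ∧ p.2 ≤ n := by
  simp only [TM, Multiset.mem_bind, Multiset.mem_map, Multiset.mem_range]
  constructor
  · rintro ⟨i, hi, j, hj, rfl⟩
    simp only
    omega
  · rintro ⟨h1, h2, h3, h4⟩
    exact ⟨p.1 - 1, by omega, p.2 - 1, by omega, by rw [Prod.ext_iff]; constructor <;> simp <;> omega⟩


end SW

theorem stmt_8 (n : ℕ) (hn : 2 ≤ n) :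
    Function.Injective (fun i : Fin (specialWord n).length =>
      cyclicPair (specialWord n) i) ∧
    Set.range (fun i : Fin (specialWord n).length => cyclicPair (specialWord n) i) =
      {p : ℕ × ℕ | 1 ≤ p.1 ∧ p.1 ≤ n ∧ 1 ≤ p.2 ∧ p.2 ≤ n} := by
  have h1 : 1 ≤ n := by omega
  have hmain := SW.main n h1
  have hnodup : (SW.cyc (specialWord n)).Nodup := by
    rw [← Multiset.coe_nodup, hmain]
    exact SW.TM_nodup n
  have hget := SW.cyc_get (specialWord n)
  constructor
  · intro i j hij
    simp only at hij
    rw [hget i, hget j] at hij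
    have hinj := List.nodup_iff_injective_get.mp hnodup
    have h2 := hinj hij
    have h3 := congrArg Fin.val h2
    exact Fin.ext h3
  · ext p
    simp only [Set.mem_range, Set.mem_setOf_eq]
    rw [← SW.TM_mem n p, ← hmain, Multiset.mem_coe]
    constructor
    · rintro ⟨i, rfl⟩
      rw [hget i]
      exact List.get_mem _ _
    · intro hp
      obtain ⟨i, hi⟩ := List.mem_iff_get.mp hp
      refine ⟨Fin.cast (SW.cyc_length (specialWord n)) i, ?_⟩
      rw [hget]
      rw [← hi]
      have hcc : (Fin.cast (SW.cyc_length (specialWord n)).symm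
          (Fin.cast (SW.cyc_length (specialWord n)) i)) = i := rfl
      rw [hcc]
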